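/- Let p ∈ [0,1], let (Z_i)_{i∈ℕ} be an i.i.d. sequence of Bernoulli(p) random variables on a probability space Ω, let μ̂_n = (1/n)∑_{i=1}^n Z_i, let d ∈ ℝ, and let Δ > 0. Define the stopping time J = inf{n ∈ ℕ, n ≥ 1 : |μ̂_n − d| ≥ ε(Δ, n)} (with J = ∞ if no such n exists). Then the probability that J < ∞ and the decision is incorrect—i.e., that J < ∞ and either (μ̂_J − d ≥ ε(Δ, J) and p < d) or (μ̂_J − d ≤ −ε(Δ, J) and p ≥ d)—is at most Δ. -/

import Mathlib

open MeasureTheory ProbabilityTheory Classical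

/-- The adaptive confidence radius
`ε(δ,n) = sqrt(((3/5)·log(log_{11/10}(n) + 1) + (5/9)·log(24/δ))/n)`. -/
noncomputable def eps (δ : ℝ) (n : ℕ) : ℝ :=
  Real.sqrt (((3 / 5) * Real.log (Real.log n / Real.log (11 / 10) + 1)
      + (5 / 9) * Real.log (24 / δ)) / n)

/-- The empirical mean `μ̂_n = (1/n) ∑_{i=1}^n Z_i`. -/
noncomputable def muhat {Ω : Type*} (Z : ℕ → Ω → ℝ) (n : ℕ) (ω : Ω) : ℝ :=
  (1 / n : ℝ) * ∑ i ∈ Finset.Icc 1 n, Z i ω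

/-- The stopping time `J = inf {n ≥ 1 : |μ̂_n − d| ≥ ε(Δ, n)}` of the verification
algorithm for the atomic specification `μ_Z ≥ d` (with `J = ∞` if no such `n` exists). -/
noncomputable def stopJ {Ω : Type*} (Z : ℕ → Ω → ℝ) (d Δ : ℝ) (ω : Ω) : ℕ∞ :=
  if ∃ n : ℕ, 1 ≤ n ∧ eps Δ n ≤ |muhat Z n ω - d|
  then ((sInf {n : ℕ | 1 ≤ n ∧ eps Δ n ≤ |muhat Z n ω - d|} : ℕ) : ℕ∞)
  else ⊤

set_option linter.unusedSectionVars false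
set_option linter.unnecessarySeqFocus false
set_option linter.unusedTactic false
set_option maxHeartbeats 1000000
section AuxVerify
open Finset


lemma hoeffding_bern (p : ℝ) (h0 : 0 ≤ p) (h1 : p ≤ 1) (t : ℝ) :
    (1 - p) * Real.exp (-(t * p)) + p * Real.exp (t * (1 - p)) ≤ Real.exp (t ^ 2 / 8) := by
  have hexp8 : (1:ℝ) ≤ Real.exp (t ^ 2 / 8) := Real.one_le_exp (by positivity)
  rcases eq_or_lt_of_le h0 with h0'|h0'
  · simp [← h0'] at *; simpa using hexp8
  rcases eq_or_lt_of_le h1 with h1'|h1'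
  · simp [h1'] at *; simpa using hexp8
  set D : ℝ → ℝ := fun s => 1 - p + p * Real.exp s with hDdef
  have hDpos : ∀ s, 0 < D s := fun s => by
    have := Real.exp_pos s
    simp only [hDdef]
    nlinarith
  have hD' : ∀ s, HasDerivAt D (p * Real.exp s) s := fun s => by
    exact ((Real.hasDerivAt_exp s).const_mul p).const_add (1 - p)
  set ψ : ℝ → ℝ := fun s => s / 4 + p - p * Real.exp s / D s with hψdef
  have hψ' : ∀ s, HasDerivAt ψ
      (1/4 - ((p * Real.exp s) * D s - (p * Real.exp s) * (p * Real.exp s)) / (D s)^2) s := by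
    intro s
    have h1 : HasDerivAt (fun s => p * Real.exp s / D s)
        (((p * Real.exp s) * D s - (p * Real.exp s) * (p * Real.exp s)) / (D s)^2) s :=
      ((Real.hasDerivAt_exp s).const_mul p).div (hD' s) (ne_of_gt (hDpos s))
    exact (((hasDerivAt_id s).div_const 4).add_const p).sub h1
  have hψderiv_nonneg : ∀ s, 0 ≤ 1/4 - ((p * Real.exp s) * D s - (p * Real.exp s) * (p * Real.exp s)) / (D s)^2 := by
    intro s
    have hu : 0 < p * Real.exp s := by positivity
    have hD : 0 < D s := hDpos s
    have hDu : D s - p * Real.exp s = 1 - p := by simp [hDdef]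
    rw [sub_nonneg, div_le_iff₀ (by positivity)]
    nlinarith [sq_nonneg (D s - 2 * (p * Real.exp s))]
  have hψdiff : Differentiable ℝ ψ := fun s => (hψ' s).differentiableAt
  have hψmono : Monotone ψ := by
    apply monotone_of_deriv_nonneg hψdiff
    intro s
    rw [(hψ' s).deriv]
    exact hψderiv_nonneg s
  have hψ0 : ψ 0 = 0 := by simp [hψdef, hDdef]
  set φ : ℝ → ℝ := fun s => s ^ 2 / 8 + s * p - Real.log (D s) with hφdef
  have hφ' : ∀ s, HasDerivAt φ (ψ s) s := by
    intro s
    have h1 : HasDerivAt (fun s : ℝ => s ^ 2 / 8) (s / 4) s := by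
      have := (hasDerivAt_pow 2 s).div_const 8
      refine this.congr_deriv ?_; norm_num; ring
    have h2 : HasDerivAt (fun s : ℝ => s * p) p s := by
      simpa using (hasDerivAt_id s).mul_const p
    have h3 : HasDerivAt (fun s => Real.log (D s)) (p * Real.exp s / D s) s :=
      (hD' s).log (ne_of_gt (hDpos s))
    exact (h1.add h2).sub h3
  have hφ0 : φ 0 = 0 := by simp [hφdef, hDdef]
  have hφdiff : Differentiable ℝ φ := fun s => (hφ' s).differentiableAt
  have key : 0 ≤ φ t := by
    rcases le_total 0 t with ht|ht
    · have hmono : MonotoneOn φ (Set.Ici 0) := by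
        apply monotoneOn_of_deriv_nonneg (convex_Ici 0) hφdiff.continuous.continuousOn
          (hφdiff.differentiableOn)
        intro x hx
        rw [(hφ' x).deriv, ← hψ0]
        exact hψmono (le_of_lt (by simpa using hx))
      have := hmono (Set.self_mem_Ici) (by exact ht) ht
      rwa [hφ0] at this
    · have hanti : AntitoneOn φ (Set.Iic 0) := by
        apply antitoneOn_of_deriv_nonpos (convex_Iic 0) hφdiff.continuous.continuousOn
          (hφdiff.differentiableOn)
        intro x hx
        rw [(hφ' x).deriv, ← hψ0]
        exact hψmono (le_of_lt (by simpa using hx))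
      have := hanti (by exact ht) (Set.self_mem_Iic) ht
      rwa [hφ0] at this
  -- conclude
  have key' : 0 ≤ t ^ 2 / 8 + t * p - Real.log (D t) := key
  have hlog : Real.log (D t) ≤ t ^ 2 / 8 + t * p := by linarith
  have hDle : D t ≤ Real.exp (t ^ 2 / 8 + t * p) :=
    (Real.log_le_iff_le_exp (hDpos t)).1 hlog
  have : (1 - p) * Real.exp (-(t * p)) + p * Real.exp (t * (1 - p))
      = Real.exp (-(t * p)) * D t := by
    rw [show t * (1 - p) = t + -(t * p) by ring, Real.exp_add]
    show _ = _ * (1 - p + p * Real.exp t)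
    ring
  rw [this]
  calc Real.exp (-(t * p)) * D t ≤ Real.exp (-(t * p)) * Real.exp (t ^ 2 / 8 + t * p) := by
        exact mul_le_mul_of_nonneg_left hDle (le_of_lt (Real.exp_pos _))
    _ = Real.exp (t ^ 2 / 8) := by rw [← Real.exp_add]; ring_nf

open Finset

lemma tele_term (k : ℕ) (hk : 1 ≤ k) :
    Real.exp (-(12/11) * Real.log (k+1))
      ≤ 11 * (Real.exp (-(1/11) * Real.log k) - Real.exp (-(1/11) * Real.log (k+1))) := by
  have hk0 : (0:ℝ) < k := by exact_mod_cast hk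
  have hk1 : (0:ℝ) < (k:ℝ) + 1 := by linarith
  set x := Real.log k with hxdef
  set y := Real.log ((k:ℝ)+1) with hydef
  have hey : Real.exp y = (k:ℝ) + 1 := Real.exp_log hk1
  have hyx : 1 / ((k:ℝ)+1) ≤ y - x := by
    have h'' : Real.log ((k:ℝ)/((k:ℝ)+1)) ≤ (k:ℝ)/((k:ℝ)+1) - 1 :=
      Real.log_le_sub_one_of_pos (by positivity)
    have hlogdiv : Real.log ((k:ℝ)/((k:ℝ)+1)) = x - y := Real.log_div (ne_of_gt hk0) (ne_of_gt hk1)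
    rw [hlogdiv] at h''
    have : (k:ℝ)/((k:ℝ)+1) - 1 = -(1/((k:ℝ)+1)) := by field_simp; ring
    rw [this] at h''
    linarith
  have hs : 11 * Real.log (1 + 1/(11*((k:ℝ)+1))) ≤ 1/((k:ℝ)+1) := by
    have := Real.log_le_sub_one_of_pos (show (0:ℝ) < 1 + 1/(11*((k:ℝ)+1)) by positivity)
    have h2 : 1 + 1/(11*((k:ℝ)+1)) - 1 = 1/(11*((k:ℝ)+1)) := by ring
    rw [h2] at this
    calc 11 * Real.log (1 + 1/(11*((k:ℝ)+1))) ≤ 11 * (1/(11*((k:ℝ)+1))) := by linarith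
      _ = 1/((k:ℝ)+1) := by field_simp
  have hexp_ge : 1 + 1/(11*((k:ℝ)+1)) ≤ Real.exp ((y - x)/11) := by
    have h1 : Real.log (1 + 1/(11*((k:ℝ)+1))) ≤ (y - x)/11 := by linarith
    calc 1 + 1/(11*((k:ℝ)+1)) = Real.exp (Real.log (1 + 1/(11*((k:ℝ)+1)))) :=
          (Real.exp_log (by positivity)).symm
      _ ≤ Real.exp ((y-x)/11) := Real.exp_le_exp.2 h1
  -- rewrite both sides
  have hxy : Real.exp (-(1/11) * x) = Real.exp (-(1/11) * y) * Real.exp ((y - x)/11) := by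
    rw [← Real.exp_add]; congr 1; ring
  have hLHS : Real.exp (-(12/11) * y) = Real.exp (-(1/11) * y) * (1/((k:ℝ)+1)) := by
    rw [show -(12/11) * y = -(1/11) * y + (-y) by ring, Real.exp_add, Real.exp_neg, hey]
    ring
  rw [hLHS, hxy]
  have hpos : (0:ℝ) < Real.exp (-(1/11) * y) := Real.exp_pos _
  have : 11 * (Real.exp (-(1/11)*y) * Real.exp ((y-x)/11) - Real.exp (-(1/11)*y))
      = Real.exp (-(1/11)*y) * (11 * (Real.exp ((y-x)/11) - 1)) := by ring
  rw [this]
  apply mul_le_mul_of_nonneg_left _ hpos.le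
  have : 11 * (Real.exp ((y-x)/11) - 1) ≥ 11 * ((1 + 1/(11*((k:ℝ)+1))) - 1) := by
    have := hexp_ge; linarith
  calc (1/((k:ℝ)+1)) = 11 * ((1 + 1/(11*((k:ℝ)+1))) - 1) := by field_simp; ring
    _ ≤ 11 * (Real.exp ((y-x)/11) - 1) := this

lemma partial_sum_bound (K : ℕ) :
    ∑ k ∈ Finset.range K, Real.exp (-(12/11) * Real.log (k+1))
      ≤ 12 - 11 * Real.exp (-(1/11) * Real.log K) := by
  induction K with
  | zero => simp; norm_num
  | succ K ih =>
    rw [Finset.sum_range_succ]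
    rcases Nat.eq_zero_or_pos K with hK|hK
    · subst hK
      simp [Real.log_one]; norm_num
    · have := tele_term K hK
      push_cast
      push_cast at ih this
      linarith

lemma tsum_u_bound :
    (∑' k : ℕ, ENNReal.ofReal (Real.exp (-(12/11) * Real.log (k+1)))) ≤ ENNReal.ofReal 12 := by
  rw [ENNReal.tsum_eq_iSup_sum]
  apply iSup_le
  intro s
  obtain ⟨K, hK⟩ := Finset.exists_nat_subset_range s
  calc ∑ k ∈ s, ENNReal.ofReal (Real.exp (-(12/11) * Real.log (k+1)))
      ≤ ∑ k ∈ Finset.range K, ENNReal.ofReal (Real.exp (-(12/11) * Real.log (k+1))) :=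
        Finset.sum_le_sum_of_subset hK
    _ = ENNReal.ofReal (∑ k ∈ Finset.range K, Real.exp (-(12/11) * Real.log (k+1))) :=
        (ENNReal.ofReal_sum_of_nonneg (fun k _ => (Real.exp_pos _).le)).symm
    _ ≤ ENNReal.ofReal 12 := by
        apply ENNReal.ofReal_le_ofReal
        have := partial_sum_bound K
        have h2 : 0 ≤ 11 * Real.exp (-(1/11) * Real.log K) := by positivity
        linarith


section Bern
variable {Ω : Type*} [MeasurableSpace Ω] (μ : Measure Ω) [IsProbabilityMeasure μ]
  (p : ℝ) (h0 : 0 ≤ p) (h1 : p ≤ 1)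
  (Z : ℕ → Ω → ℝ) (hmeas : ∀ i, Measurable (Z i))
  (hindep : iIndepFun Z μ)
  (hval : ∀ i ω, Z i ω = 0 ∨ Z i ω = 1)
  (hbern : ∀ i, μ {ω | Z i ω = 1} = ENNReal.ofReal p)

include hmeas hval hbern h0 h1

lemma bern_setmeas (i : ℕ) : MeasurableSet {ω | Z i ω = 1} :=
  (hmeas i) (measurableSet_singleton 1)

lemma bern_indicator (i : ℕ) :
    Z i = Set.indicator {ω | Z i ω = 1} (fun _ => (1:ℝ)) := by
  funext ω
  rcases hval i ω with h|h <;>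
    simp [Set.indicator_apply, Set.mem_setOf_eq, h]

lemma bern_integrable (i : ℕ) : Integrable (Z i) μ := by
  rw [bern_indicator μ p h0 h1 Z hmeas hval hbern i]
  exact (integrable_const (1:ℝ)).indicator (bern_setmeas μ p h0 h1 Z hmeas hval hbern i)

lemma bern_integral (i : ℕ) : ∫ ω, Z i ω ∂μ = p := by
  rw [show (fun ω => Z i ω) = Z i from rfl, bern_indicator μ p h0 h1 Z hmeas hval hbern i,
    integral_indicator_const (1:ℝ) (bern_setmeas μ p h0 h1 Z hmeas hval hbern i), measureReal_def, hbern i]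
  simp [ENNReal.toReal_ofReal h0]

lemma bern_comp_eq (i : ℕ) (f : ℝ → ℝ) :
    (fun ω => f (Z i ω)) = fun ω => f 0 + (f 1 - f 0) * Z i ω := by
  funext ω
  rcases hval i ω with h|h <;> simp [h]

lemma bern_comp_integrable (i : ℕ) (f : ℝ → ℝ) :
    Integrable (fun ω => f (Z i ω)) μ := by
  rw [bern_comp_eq μ p h0 h1 Z hmeas hval hbern i f]
  exact (integrable_const _).add
    ((bern_integrable μ p h0 h1 Z hmeas hval hbern i).const_mul _)

lemma bern_comp_integral (i : ℕ) (f : ℝ → ℝ) :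
    ∫ ω, f (Z i ω) ∂μ = (1 - p) * f 0 + p * f 1 := by
  rw [bern_comp_eq μ p h0 h1 Z hmeas hval hbern i f]
  rw [integral_add (integrable_const _)
    ((bern_integrable μ p h0 h1 Z hmeas hval hbern i).const_mul _),
    integral_const, integral_const_mul, bern_integral μ p h0 h1 Z hmeas hval hbern i]
  simp
  ring

lemma bern_exp_integral (i : ℕ) (t : ℝ) :
    ∫ ω, Real.exp (t * (Z i ω - p)) ∂μ
      = (1 - p) * Real.exp (-(t * p)) + p * Real.exp (t * (1 - p)) := by
  have := bern_comp_integral μ p h0 h1 Z hmeas hval hbern i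
    (fun x => Real.exp (t * (x - p)))
  simpa [mul_comm, neg_mul, mul_sub] using this


include hindep in
lemma max_hoeffding (t a : ℝ) (ht : 0 < t) (N : ℕ) :
    μ {ω | ∃ m, 1 ≤ m ∧ m ≤ N ∧ a ≤ (∑ i ∈ Finset.Icc 1 m, Z i ω) - m * p}
      ≤ ENNReal.ofReal (Real.exp (N * t ^ 2 / 8 - t * a)) := by
  classical
  set Y : ℕ → Ω → ℝ := fun i ω => Z i ω - p with hYdef
  have hmeasY : ∀ i, Measurable (Y i) := fun i => (hmeas i).sub_const p
  have hindepY : iIndepFun Y μ :=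
    hindep.comp (fun i => fun x => x - p) (fun i => measurable_id.sub_const p)
  have hYint : ∀ (s : ℝ) i, Integrable (fun ω => Real.exp (s * Y i ω)) μ := fun s i => by
    have := bern_comp_integrable μ p h0 h1 Z hmeas hval hbern i (fun x => Real.exp (s * (x - p)))
    simpa [hYdef] using this
  -- the exponential process
  set g : ℕ → Ω → ℝ := fun n ω => Real.exp (t * ((∑ i ∈ Finset.Icc 1 n, Z i ω) - n * p))
    with hgdef
  have hsum : ∀ n ω, (∑ i ∈ Finset.Icc 1 n, Z i ω) - n * p = (∑ i ∈ Finset.Icc 1 n, Y i) ω := by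
    intro n ω
    simp only [hYdef, Finset.sum_apply, Finset.sum_sub_distrib, Finset.sum_const,
      Nat.card_Icc]
    simp [nsmul_eq_mul]
  have hg_eq : ∀ n, g n = fun ω => Real.exp (t * (∑ i ∈ Finset.Icc 1 n, Y i) ω) := by
    intro n; funext ω; rw [hgdef]; simp only []; rw [hsum n ω]
  have hgint : ∀ n, Integrable (g n) μ := by
    intro n
    rw [hg_eq n]
    exact hindepY.integrable_exp_mul_sum hmeasY (fun i _ => hYint t i)
  -- filtration and adaptedness
  have hSM : ∀ i, StronglyMeasurable (Z i) := fun i => (hmeas i).stronglyMeasurable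
  set ℱ := Filtration.natural Z hSM with hFdef
  have hZad : StronglyAdapted ℱ Z := Filtration.stronglyAdapted_natural hSM
  have hadp : StronglyAdapted ℱ g := by
    intro n
    have hSMsum : StronglyMeasurable[ℱ n] (fun ω => ∑ i ∈ Finset.Icc 1 n, Z i ω) := by
      apply Finset.stronglyMeasurable_fun_sum
      intro i hi
      exact (hZad i).mono (ℱ.mono (Finset.mem_Icc.1 hi).2)
    exact (Real.continuous_exp.comp_stronglyMeasurable
      (((hSMsum.sub stronglyMeasurable_const).const_mul t)))
  -- submartingale
  have hmart : ∀ n, g n ≤ᵐ[μ] μ[g (n + 1)|ℱ n] := by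
    intro n
    set h : Ω → ℝ := fun ω => Real.exp (t * (Z (n + 1) ω - p)) with hhdef
    have hsplit : g (n + 1) = g n * h := by
      funext ω
      simp only [hgdef, hhdef, Pi.mul_apply, ← Real.exp_add]
      congr 1
      rw [Finset.sum_Icc_succ_top (Nat.one_le_iff_ne_zero.2 (Nat.succ_ne_zero n))]
      push_cast
      ring
    have hint_h : Integrable h μ := by
      have := bern_comp_integrable μ p h0 h1 Z hmeas hval hbern (n + 1) (fun x => Real.exp (t * (x - p)))
      simpa [hhdef] using this
    have hpull : μ[g n * h|ℱ n] =ᵐ[μ] g n * μ[h|ℱ n] := by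
      apply condExp_mul_of_stronglyMeasurable_left (hadp n)
      · rw [← hsplit]; exact hgint (n + 1)
      · exact hint_h
    have hcondh : μ[h|ℱ n] =ᵐ[μ] fun _ => μ[h] := by
      apply condExp_indep_eq ((hmeas (n + 1)).comap_le) (ℱ.le n)
      · exact (Real.continuous_exp.measurable.comp
          ((measurable_iff_comap_le.2 le_rfl).sub_const p |>.const_mul t)).stronglyMeasurable
      · exact hindep.indep_comap_natural_of_lt hSM (Nat.lt_succ_self n)
    have hInt1 : (1:ℝ) ≤ μ[h] := by
      have hval' : μ[h] = (1 - p) * Real.exp (-(t * p)) + p * Real.exp (t * (1 - p)) := by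
        simpa [hhdef] using bern_exp_integral μ p h0 h1 Z hmeas hval hbern (n + 1) t
      rw [hval']
      have := Real.geom_mean_le_arith_mean2_weighted (by linarith : (0:ℝ) ≤ 1 - p) h0
        (Real.exp_pos (-(t * p))).le (Real.exp_pos (t * (1 - p))).le (by ring)
      calc (1:ℝ) = Real.exp (-(t * p)) ^ (1 - p) * Real.exp (t * (1 - p)) ^ p := by
            rw [← Real.exp_mul, ← Real.exp_mul, ← Real.exp_add,
              show -(t * p) * (1 - p) + t * (1 - p) * p = 0 by ring, Real.exp_zero]
        _ ≤ _ := this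
    calc g n =ᵐ[μ] g n * fun _ => (1:ℝ) := by
          apply Filter.EventuallyEq.of_eq; funext ω; simp
      _ ≤ᵐ[μ] g n * fun _ => μ[h] := by
          apply Filter.Eventually.of_forall
          intro ω
          simp only [Pi.mul_apply]
          have : (0:ℝ) < g n ω := Real.exp_pos _
          nlinarith
      _ =ᵐ[μ] g n * μ[h|ℱ n] := by
          filter_upwards [hcondh] with ω hω
          simp [hω]
      _ =ᵐ[μ] μ[g (n+1)|ℱ n] := by rw [hsplit]; exact hpull.symm
  have hsub : Submartingale g ℱ μ := submartingale_nat hadp hgint hmart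
  have hnonneg : 0 ≤ g := fun n ω => (Real.exp_pos _).le
  -- mgf bound
  have hmgf : ∫ ω, g N ω ∂μ ≤ Real.exp (N * t ^ 2 / 8) := by
    have : ∫ ω, g N ω ∂μ = mgf (∑ i ∈ Finset.Icc 1 N, Y i) μ t := by
      rw [hg_eq N]; rfl
    rw [this, hindepY.mgf_sum hmeasY]
    calc ∏ i ∈ Finset.Icc 1 N, mgf (Y i) μ t
        ≤ ∏ i ∈ Finset.Icc 1 N, Real.exp (t ^ 2 / 8) := by
          apply Finset.prod_le_prod (fun i _ => mgf_nonneg)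
          intro i _
          have : mgf (Y i) μ t = (1 - p) * Real.exp (-(t * p)) + p * Real.exp (t * (1 - p)) := by
            simpa [mgf, hYdef] using bern_exp_integral μ p h0 h1 Z hmeas hval hbern i t
          rw [this]
          exact hoeffding_bern p h0 h1 t
      _ = Real.exp (N * t ^ 2 / 8) := by
          rw [Finset.prod_const, Nat.card_Icc, ← Real.exp_nat_mul]
          norm_num
          ring_nf
  -- Doob's maximal inequality
  set ε : NNReal := (Real.exp (t * a)).toNNReal with hεdef
  have hεcoe : (ε : ℝ) = Real.exp (t * a) := Real.coe_toNNReal _ (Real.exp_pos _).le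
  set SS := {ω | (ε : ℝ) ≤ (Finset.range (N + 1)).sup' Finset.nonempty_range_add_one
      fun k => g k ω} with hSSdef
  have hdoob := maximal_ineq hsub hnonneg (ε := ε) N
  have hsubset : {ω | ∃ m, 1 ≤ m ∧ m ≤ N ∧ a ≤ (∑ i ∈ Finset.Icc 1 m, Z i ω) - ↑m * p} ⊆ SS := by
    rintro ω ⟨m, hm1, hmN, hma⟩
    rw [hSSdef, Set.mem_setOf_eq, hεcoe]
    calc Real.exp (t * a) ≤ g m ω := by
          rw [hgdef]
          exact Real.exp_le_exp.2 (mul_le_mul_of_nonneg_left hma ht.le)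
      _ ≤ _ := Finset.le_sup' (fun k => g k ω)
          (Finset.mem_range.2 (Nat.lt_succ_of_le hmN))
  have hsetint : ∫ ω in SS, g N ω ∂μ ≤ Real.exp (N * t ^ 2 / 8) := by
    refine le_trans ?_ hmgf
    apply setIntegral_le_integral (hgint N)
    exact Filter.Eventually.of_forall (fun ω => hnonneg N ω)
  have hεne : (ε : ENNReal) ≠ 0 := by
    simp only [ne_eq, ENNReal.coe_eq_zero]
    intro hc
    rw [hc] at hεcoe
    exact absurd hεcoe.symm (ne_of_gt (Real.exp_pos _))
  have hμSS : μ SS ≤ ENNReal.ofReal (Real.exp (N * t ^ 2 / 8 - t * a)) := by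
    have h2 : (ε : ENNReal) * μ SS ≤ ENNReal.ofReal (Real.exp (N * t ^ 2 / 8)) :=
      le_trans hdoob (ENNReal.ofReal_le_ofReal hsetint)
    have h3 : μ SS ≤ ENNReal.ofReal (Real.exp (N * t ^ 2 / 8)) / (ε : ENNReal) :=
      (ENNReal.le_div_iff_mul_le (Or.inl hεne) (Or.inl ENNReal.coe_ne_top)).2
        (by rwa [mul_comm])
    refine le_trans h3 (le_of_eq ?_)
    have : (ε : ENNReal) = ENNReal.ofReal (Real.exp (t * a)) := by
      rw [hεdef]; rfl
    rw [this, ← ENNReal.ofReal_div_of_pos (Real.exp_pos _), ← Real.exp_sub]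
  exact le_trans (measure_mono hsubset) hμSS


include hindep in
lemma epoch_bound (k : ℕ) (ck : ℝ) (hck : 0 < ck) :
    μ {ω | ∃ m, 1 ≤ m ∧ m ≤ ⌊(11/10:ℝ)^(k+1)⌋₊ ∧
        Real.sqrt ((11/10:ℝ)^k * ck) ≤ (∑ i ∈ Finset.Icc 1 m, Z i ω) - ↑m * p}
      ≤ ENNReal.ofReal (Real.exp (-(20/11) * ck)) := by
  have hpw : (0:ℝ) < (11/10:ℝ)^k := by positivity
  have hak : 0 < Real.sqrt ((11/10:ℝ)^k * ck) := Real.sqrt_pos.2 (by positivity)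
  set ak := Real.sqrt ((11/10:ℝ)^k * ck) with hakdef
  set Nk := ⌊(11/10:ℝ)^(k+1)⌋₊ with hNkdef
  have hNk1 : 1 ≤ Nk := by
    apply Nat.le_floor
    push_cast
    exact one_le_pow₀ (by norm_num)
  have hNkr : (1:ℝ) ≤ (Nk:ℝ) := by exact_mod_cast hNk1
  have hNkle : (Nk:ℝ) ≤ (11/10:ℝ)^(k+1) := Nat.floor_le (by positivity)
  have ht : 0 < 4 * ak / Nk := by positivity
  have hmax := max_hoeffding μ p h0 h1 Z hmeas hindep hval hbern (4 * ak / Nk) ak ht Nk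
  refine le_trans hmax (ENNReal.ofReal_le_ofReal (Real.exp_le_exp.2 ?_))
  have hasq : ak ^ 2 = (11/10:ℝ)^k * ck := Real.sq_sqrt (by positivity)
  have hE : (Nk:ℝ) * (4 * ak / Nk)^2 / 8 - (4 * ak / Nk) * ak = -(2 * ak^2 / Nk) := by
    field_simp
    ring
  rw [hE]
  have h2 : (20/11) * ck ≤ 2 * ak^2 / Nk := by
    rw [hasq, le_div_iff₀ (by linarith)]
    rw [pow_succ] at hNkle
    nlinarith
  linarith

end Bern

end AuxVerify

/-- Probabilistic soundness and precision of the verification algorithm for the atomic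
specification `p ≥ d`: the probability that the algorithm stops and reports an incorrect
answer is at most `Δ`. -/
theorem verify_sound_precise
    {Ω : Type*} [MeasurableSpace Ω] (μ : Measure Ω) [IsProbabilityMeasure μ]
    (p : ℝ) (hp : p ∈ Set.Icc (0 : ℝ) 1)
    (Z : ℕ → Ω → ℝ)
    (hmeas : ∀ i, Measurable (Z i))
    (hindep : iIndepFun Z μ)
    (hval : ∀ i ω, Z i ω = 0 ∨ Z i ω = 1)
    (hbern : ∀ i, μ {ω | Z i ω = 1} = ENNReal.ofReal p)
    (d : ℝ) (Δ : ℝ) (hΔ : 0 < Δ) :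
    μ {ω | ∃ n : ℕ, stopJ Z d Δ ω = (n : ℕ∞) ∧
        ((muhat Z n ω - d ≥ eps Δ n ∧ p < d) ∨
         (muhat Z n ω - d ≤ -eps Δ n ∧ p ≥ d))}
      ≤ ENNReal.ofReal Δ := by


  classical
  obtain ⟨hp0, hp1⟩ := hp
  by_cases hΔ1 : (1:ℝ) ≤ Δ
  · refine le_trans prob_le_one ?_
    rw [← ENNReal.ofReal_one]
    exact ENNReal.ofReal_le_ofReal hΔ1
  push_neg at hΔ1
  set L := Real.log (24 / Δ) with hLdef
  have hL : 0 < L := Real.log_pos (by rw [lt_div_iff₀ hΔ]; linarith)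
  set c : ℕ → ℝ := fun k => (3/5) * Real.log ((k:ℝ)+1) + (5/9) * L with hcdef
  have hcpos : ∀ k, 0 < c k := by
    intro k
    have h1 : 0 ≤ Real.log ((k:ℝ)+1) :=
      Real.log_nonneg (le_add_of_nonneg_left (Nat.cast_nonneg k))
    simp only [hcdef]
    nlinarith
  set W : ℕ → Ω → ℝ := fun i ω => 1 - Z i ω with hWdef
  set A : ℕ → Set Ω := fun k => {ω | ∃ m, 1 ≤ m ∧ m ≤ ⌊(11/10:ℝ)^(k+1)⌋₊ ∧
      Real.sqrt ((11/10:ℝ)^k * c k) ≤ (∑ i ∈ Finset.Icc 1 m, Z i ω) - ↑m * p} with hAdef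
  set B : ℕ → Set Ω := fun k => {ω | ∃ m, 1 ≤ m ∧ m ≤ ⌊(11/10:ℝ)^(k+1)⌋₊ ∧
      Real.sqrt ((11/10:ℝ)^k * c k) ≤ (∑ i ∈ Finset.Icc 1 m, W i ω) - ↑m * (1-p)} with hBdef
  have hlog11 : 0 < Real.log (11/10 : ℝ) := Real.log_pos (by norm_num)
  -- step 1 : inclusion
  have hsub : {ω | ∃ n : ℕ, stopJ Z d Δ ω = (n : ℕ∞) ∧
        ((muhat Z n ω - d ≥ eps Δ n ∧ p < d) ∨
         (muhat Z n ω - d ≤ -eps Δ n ∧ p ≥ d))} ⊆ ⋃ k, A k ∪ B k := by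
    rintro ω ⟨n, hstop, hcase⟩
    have hn1 : 1 ≤ n := by
      rw [stopJ] at hstop
      split at hstop
      · next hex =>
          have hne : {m : ℕ | 1 ≤ m ∧ eps Δ m ≤ |muhat Z m ω - d|}.Nonempty := hex
          have heq : sInf {m : ℕ | 1 ≤ m ∧ eps Δ m ≤ |muhat Z m ω - d|} = n := by
            exact_mod_cast hstop
          have hmem := Nat.sInf_mem hne
          rw [heq] at hmem
          exact hmem.1
      · next => exact absurd hstop (by simp)
    have hn0 : (0:ℝ) < n := by exact_mod_cast hn1
    set x := Real.log n / Real.log (11/10 : ℝ) with hxdef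
    have hx0 : 0 ≤ x :=
      div_nonneg (Real.log_nonneg (by exact_mod_cast hn1)) hlog11.le
    set k := ⌊x⌋₊ with hkdef
    have hk_le : (k:ℝ) ≤ x := Nat.floor_le hx0
    have hk_lt : x < (k:ℝ) + 1 := Nat.lt_floor_add_one x
    have hlogn : Real.log n = x * Real.log (11/10 : ℝ) := by
      rw [hxdef]; field_simp
    have hpow_le : (11/10:ℝ)^k ≤ n := by
      have h1 : Real.log ((11/10:ℝ)^k) ≤ Real.log n := by
        rw [Real.log_pow, hlogn]
        push_cast
        nlinarith
      calc (11/10:ℝ)^k = Real.exp (Real.log ((11/10:ℝ)^k)) :=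
            (Real.exp_log (by positivity)).symm
        _ ≤ Real.exp (Real.log n) := Real.exp_le_exp.2 h1
        _ = n := Real.exp_log hn0
    have hn_le_N : n ≤ ⌊(11/10:ℝ)^(k+1)⌋₊ := by
      apply Nat.le_floor
      have h1 : Real.log n ≤ Real.log ((11/10:ℝ)^(k+1)) := by
        rw [Real.log_pow, hlogn]
        push_cast
        nlinarith
      calc (n:ℝ) = Real.exp (Real.log n) := (Real.exp_log hn0).symm
        _ ≤ Real.exp (Real.log ((11/10:ℝ)^(k+1))) := Real.exp_le_exp.2 h1
        _ = (11/10:ℝ)^(k+1) := Real.exp_log (by positivity)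
    set cn := (3/5) * Real.log (x + 1) + (5/9) * L with hcndef
    have heps_eq : eps Δ n = Real.sqrt (cn / n) := by
      rw [eps, hcndef, hxdef, hLdef]
    have hcn_ge : c k ≤ cn := by
      have h1 : Real.log ((k:ℝ)+1) ≤ Real.log (x+1) :=
        Real.log_le_log (by positivity) (by linarith)
      simp only [hcdef, hcndef]
      linarith
    have hna : Real.sqrt ((11/10:ℝ)^k * c k) ≤ (n:ℝ) * eps Δ n := by
      rw [heps_eq]
      have h1 : (n:ℝ) * Real.sqrt (cn/n) = Real.sqrt ((n:ℝ) * cn) := by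
        rw [show (n:ℝ) * cn = (n:ℝ)^2 * (cn/n) by field_simp,
          Real.sqrt_mul (sq_nonneg _), Real.sqrt_sq hn0.le]
      rw [h1]
      apply Real.sqrt_le_sqrt
      apply mul_le_mul hpow_le hcn_ge (hcpos k).le hn0.le
    have hmuhat : (n:ℝ) * muhat Z n ω = ∑ i ∈ Finset.Icc 1 n, Z i ω := by
      rw [muhat]; field_simp
    refine Set.mem_iUnion.2 ⟨k, ?_⟩
    rcases hcase with ⟨hge, hpd⟩ | ⟨hle, hpd⟩
    · left
      refine ⟨n, hn1, hn_le_N, ?_⟩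
      have h2 : eps Δ n ≤ muhat Z n ω - p := by linarith
      have h3 : (n:ℝ) * eps Δ n ≤ (n:ℝ) * (muhat Z n ω - p) :=
        mul_le_mul_of_nonneg_left h2 hn0.le
      rw [mul_sub, hmuhat] at h3
      linarith
    · right
      refine ⟨n, hn1, hn_le_N, ?_⟩
      have h2 : eps Δ n ≤ p - muhat Z n ω := by linarith
      have h3 : (n:ℝ) * eps Δ n ≤ (n:ℝ) * (p - muhat Z n ω) :=
        mul_le_mul_of_nonneg_left h2 hn0.le
      rw [mul_sub, hmuhat] at h3
      have h4 : (∑ i ∈ Finset.Icc 1 n, W i ω) - (n:ℝ) * (1 - p)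
          = (n:ℝ)*p - ∑ i ∈ Finset.Icc 1 n, Z i ω := by
        simp only [hWdef]
        rw [Finset.sum_sub_distrib, Finset.sum_const, Nat.card_Icc]
        push_cast
        ring
      show Real.sqrt ((11/10:ℝ)^k * c k) ≤ (∑ i ∈ Finset.Icc 1 n, W i ω) - (n:ℝ) * (1 - p)
      rw [h4]
      linarith
  -- step 2 : per-epoch bounds
  have hboundA : ∀ k, μ (A k) ≤ ENNReal.ofReal (Real.exp (-(20/11) * c k)) := fun k =>
    epoch_bound μ p hp0 hp1 Z hmeas hindep hval hbern k (c k) (hcpos k)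
  have hmeasW : ∀ i, Measurable (W i) := fun i => measurable_const.sub (hmeas i)
  have hindepW : iIndepFun W μ :=
    hindep.comp (fun i => fun x => 1 - x) (fun i => measurable_const.sub measurable_id)
  have hvalW : ∀ i ω, W i ω = 0 ∨ W i ω = 1 := by
    intro i ω
    rcases hval i ω with h|h <;> simp [hWdef, h]
  have hbernW : ∀ i, μ {ω | W i ω = 1} = ENNReal.ofReal (1 - p) := by
    intro i
    have hset : {ω | W i ω = 1} = {ω | Z i ω = 1}ᶜ := by
      ext ω
      simp only [hWdef, Set.mem_setOf_eq, Set.mem_compl_iff]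
      constructor
      · intro h h1
        rw [h1] at h
        norm_num at h
      · intro h
        rcases hval i ω with h0'|h1'
        · rw [h0']; norm_num
        · exact absurd h1' h
    rw [hset, prob_compl_eq_one_sub (show MeasurableSet {ω | Z i ω = 1} from (hmeas i) (measurableSet_singleton 1)), hbern i,
      ← ENNReal.ofReal_one, ← ENNReal.ofReal_sub _ hp0]
  have hboundB : ∀ k, μ (B k) ≤ ENNReal.ofReal (Real.exp (-(20/11) * c k)) := fun k =>
    epoch_bound μ (1-p) (by linarith) (by linarith) W hmeasW hindepW hvalW hbernW k (c k) (hcpos k)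
  -- step 3 : per-term numeric bound
  have hterm : ∀ k, μ (A k) + μ (B k)
      ≤ ENNReal.ofReal ((Δ/12) * Real.exp (-(12/11) * Real.log ((k:ℝ)+1))) := by
    intro k
    have hsplit : -(20/11) * c k = -(12/11) * Real.log ((k:ℝ)+1) + (-(100/99) * L) := by
      simp only [hcdef]; ring
    have hLbd : Real.exp (-(100/99) * L) ≤ Δ/24 := by
      have h1 : Real.exp (-(100/99) * L) = Real.exp (-L) * Real.exp (-(1/99) * L) := by
        rw [← Real.exp_add]; ring_nf
      have h2 : Real.exp (-L) = Δ/24 := by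
        rw [Real.exp_neg, hLdef, Real.exp_log (by positivity), inv_div]
      have h3 : Real.exp (-(1/99) * L) ≤ 1 := Real.exp_le_one_iff.2 (by nlinarith)
      rw [h1, h2]
      nlinarith [Real.exp_pos (-(1/99) * L), hΔ]
    have hexp_bd : Real.exp (-(20/11) * c k)
        ≤ (Δ/24) * Real.exp (-(12/11) * Real.log ((k:ℝ)+1)) := by
      rw [hsplit, Real.exp_add]
      have hu : 0 ≤ Real.exp (-(12/11) * Real.log ((k:ℝ)+1)) := (Real.exp_pos _).le
      nlinarith [Real.exp_pos (-(12/11) * Real.log ((k:ℝ)+1))]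
    calc μ (A k) + μ (B k)
        ≤ ENNReal.ofReal (Real.exp (-(20/11) * c k))
          + ENNReal.ofReal (Real.exp (-(20/11) * c k)) := add_le_add (hboundA k) (hboundB k)
      _ = ENNReal.ofReal (2 * Real.exp (-(20/11) * c k)) := by
          rw [← ENNReal.ofReal_add (Real.exp_pos _).le (Real.exp_pos _).le]
          congr 1
          ring
      _ ≤ ENNReal.ofReal ((Δ/12) * Real.exp (-(12/11) * Real.log ((k:ℝ)+1))) := by
          apply ENNReal.ofReal_le_ofReal
          nlinarith [Real.exp_pos (-(20/11) * c k)]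
  -- step 4 : summation
  calc μ {ω | ∃ n : ℕ, stopJ Z d Δ ω = (n : ℕ∞) ∧
        ((muhat Z n ω - d ≥ eps Δ n ∧ p < d) ∨
         (muhat Z n ω - d ≤ -eps Δ n ∧ p ≥ d))}
      ≤ μ (⋃ k, A k ∪ B k) := measure_mono hsub
    _ ≤ ∑' k, μ (A k ∪ B k) := measure_iUnion_le _
    _ ≤ ∑' k, (μ (A k) + μ (B k)) := ENNReal.tsum_le_tsum (fun k => measure_union_le _ _)
    _ ≤ ∑' k : ℕ, ENNReal.ofReal ((Δ/12) * Real.exp (-(12/11) * Real.log ((k:ℝ)+1))) :=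
        ENNReal.tsum_le_tsum hterm
    _ = ENNReal.ofReal (Δ/12) * ∑' k : ℕ, ENNReal.ofReal (Real.exp (-(12/11) * Real.log ((k:ℝ)+1))) := by
        rw [← ENNReal.tsum_mul_left]
        congr 1
        funext k
        rw [← ENNReal.ofReal_mul (by positivity)]
    _ ≤ ENNReal.ofReal (Δ/12) * ENNReal.ofReal 12 := mul_le_mul_right tsum_u_bound _
    _ = ENNReal.ofReal Δ := by
        rw [← ENNReal.ofReal_mul (by positivity)]
        norm_num
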